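/- Let Γ1 = (V1, E1) and Γ2 = (V2, E2) be vertex-disjoint connected cubic graphs, let e1 = (a,b) ∈ E1 be an edge that is not a bridge of Γ1, and let e2 = (c,d) ∈ E2 be an edge that is not a bridge of Γ2. Let ΓD be the graph with vertex set V1 ∪ V2 and edge set (E1 \ {e1}) ∪ (E2 \ {e2}) ∪ {(a,c), (b,d)}. Then ΓD is a connected cubic graph and {(a,c), (b,d)} is a 2-cracker of ΓD. -/

import Mathlib

open SimpleGraph

/-- A graph is cubic if every vertex has exactly three neighbours. -/
def IsCubic {V : Type*} (G : SimpleGraph V) : Prop :=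
  ∀ v : V, (G.neighborSet v).ncard = 3

/-- A cracker of `G`: a nonempty set of edges of `G`, no two of which share a
vertex, whose deletion disconnects `G`, while no proper subset disconnects `G`. -/
def IsCracker {V : Type*} (G : SimpleGraph V) (C : Set (Sym2 V)) : Prop :=
  C.Nonempty ∧ C ⊆ G.edgeSet ∧
    C.Pairwise (fun e f => ∀ v : V, ¬(v ∈ e ∧ v ∈ f)) ∧
    ¬(G.deleteEdges C).Connected ∧
    ∀ C' : Set (Sym2 V), C' ⊂ C → (G.deleteEdges C').Connected

/-- A `k`-cracker is a cracker consisting of `k` edges. -/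
def IsKCracker {V : Type*} (G : SimpleGraph V) (C : Set (Sym2 V)) (k : ℕ) : Prop :=
  IsCracker G C ∧ C.ncard = k

/-- The type 2 breeding operation: delete edges (a,b) of Γ₁ and (c,d) of Γ₂ and add
the edges (a,c) and (b,d). -/
def breed2 {V₁ V₂ : Type*} (G₁ : SimpleGraph V₁) (G₂ : SimpleGraph V₂)
    (a b : V₁) (c d : V₂) : SimpleGraph (V₁ ⊕ V₂) :=
  SimpleGraph.fromRel (fun p q =>
    (∃ x y : V₁, p = Sum.inl x ∧ q = Sum.inl y ∧ G₁.Adj x y ∧ s(x, y) ≠ s(a, b)) ∨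
    (∃ x y : V₂, p = Sum.inr x ∧ q = Sum.inr y ∧ G₂.Adj x y ∧ s(x, y) ≠ s(c, d)) ∨
    (p = Sum.inl a ∧ q = Sum.inr c) ∨
    (p = Sum.inl b ∧ q = Sum.inr d))

section Aux

open Sum

set_option linter.unnecessarySeqFocus false

variable {V₁ V₂ : Type*} {G₁ : SimpleGraph V₁} {G₂ : SimpleGraph V₂} {a b : V₁} {c d : V₂}

lemma breed2_adj_ll {x y : V₁} :
    (breed2 G₁ G₂ a b c d).Adj (inl x) (inl y) ↔ G₁.Adj x y ∧ s(x, y) ≠ s(a, b) := by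
  rw [breed2, fromRel_adj]
  constructor
  · rintro ⟨hne, (h | h | h | h) | (h | h | h | h)⟩ <;>
      simp_all [Sym2.eq_iff, adj_comm] <;> tauto
  · rintro ⟨h, hne⟩
    exact ⟨by simp [h.ne], Or.inl (Or.inl ⟨x, y, rfl, rfl, h, hne⟩)⟩

lemma breed2_adj_rr {x y : V₂} :
    (breed2 G₁ G₂ a b c d).Adj (inr x) (inr y) ↔ G₂.Adj x y ∧ s(x, y) ≠ s(c, d) := by
  rw [breed2, fromRel_adj]
  constructor
  · rintro ⟨hne, (h | h | h | h) | (h | h | h | h)⟩ <;>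
      simp_all [Sym2.eq_iff, adj_comm] <;> tauto
  · rintro ⟨h, hne⟩
    exact ⟨by simp [h.ne], Or.inl (Or.inr (Or.inl ⟨x, y, rfl, rfl, h, hne⟩))⟩

lemma breed2_adj_lr {x : V₁} {y : V₂} :
    (breed2 G₁ G₂ a b c d).Adj (inl x) (inr y) ↔ (x = a ∧ y = c) ∨ (x = b ∧ y = d) := by
  rw [breed2, fromRel_adj]
  constructor
  · rintro ⟨hne, (h | h | h | h) | (h | h | h | h)⟩ <;> simp_all
  · rintro (⟨rfl, rfl⟩ | ⟨rfl, rfl⟩)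
    · exact ⟨by simp, Or.inl (Or.inr (Or.inr (Or.inl ⟨rfl, rfl⟩)))⟩
    · exact ⟨by simp, Or.inl (Or.inr (Or.inr (Or.inr ⟨rfl, rfl⟩)))⟩

lemma breed2_adj_rl {x : V₂} {y : V₁} :
    (breed2 G₁ G₂ a b c d).Adj (inr x) (inl y) ↔ (y = a ∧ x = c) ∨ (y = b ∧ x = d) := by
  rw [adj_comm, breed2_adj_lr]

lemma reach_del {V : Type*} {G : SimpleGraph V} {a b : V}
    (hr : (G.deleteEdges {s(a, b)}).Reachable a b) :
    ∀ {x y : V}, G.Walk x y → (G.deleteEdges {s(a, b)}).Reachable x y := by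
  intro x y p
  induction p with
  | nil => exact Reachable.refl _
  | @cons u v w h p ih =>
    refine Reachable.trans ?_ ih
    by_cases he : s(u, v) = s(a, b)
    · rw [Sym2.eq_iff] at he
      rcases he with ⟨rfl, rfl⟩ | ⟨rfl, rfl⟩
      · exact hr
      · exact hr.symm
    · exact Adj.reachable (by simp [h, he])

lemma connected_del {V : Type*} {G : SimpleGraph V} {a b : V}
    (h : G.Connected) (hab : G.Adj a b) (hnb : ¬ G.IsBridge s(a, b)) :
    (G.deleteEdges {s(a, b)}).Connected := by
  rw [isBridge_iff] at hnb
  push_neg at hnb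
  have hr : (G.deleteEdges {s(a, b)}).Reachable a b := hnb
  rw [connected_iff]
  refine ⟨fun x y => ?_, h.nonempty⟩
  obtain ⟨p⟩ := h.preconnected x y
  exact reach_del hr p

lemma breed2_del_connected {S : Set (Sym2 (V₁ ⊕ V₂))}
    (h₁ : G₁.Connected) (h₂ : G₂.Connected)
    (hab : G₁.Adj a b) (hnb₁ : ¬ G₁.IsBridge s(a, b))
    (hcd : G₂.Adj c d) (hnb₂ : ¬ G₂.IsBridge s(c, d))
    (hS : S ⊆ {s(Sum.inl a, Sum.inr c), s(Sum.inl b, Sum.inr d)})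
    (hs : s(Sum.inl a, Sum.inr c) ∉ S ∨ s(Sum.inl b, Sum.inr d) ∉ S) :
    ((breed2 G₁ G₂ a b c d).deleteEdges S).Connected := by
  set H := (breed2 G₁ G₂ a b c d).deleteEdges S with hH
  have hG₁ := connected_del h₁ hab hnb₁
  have hG₂ := connected_del h₂ hcd hnb₂
  have hnotS : ∀ x y : V₁, s(Sum.inl x, Sum.inl y) ∉ S := by
    intro x y hmem
    rcases hS hmem with h | h <;> simp [Sym2.eq_iff] at h
  have hnotS' : ∀ x y : V₂, s(Sum.inr x, Sum.inr y) ∉ S := by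
    intro x y hmem
    rcases hS hmem with h | h <;> simp [Sym2.eq_iff] at h
  have hfL : ∀ x y : V₁, (G₁.deleteEdges {s(a, b)}).Adj x y → H.Adj (inl x) (inl y) := by
    intro x y hxy
    rw [deleteEdges_adj] at hxy ⊢
    exact ⟨breed2_adj_ll.mpr ⟨hxy.1, hxy.2⟩, hnotS x y⟩
  have hfR : ∀ x y : V₂, (G₂.deleteEdges {s(c, d)}).Adj x y → H.Adj (inr x) (inr y) := by
    intro x y hxy
    rw [deleteEdges_adj] at hxy ⊢
    exact ⟨breed2_adj_rr.mpr ⟨hxy.1, hxy.2⟩, hnotS' x y⟩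
  have rL : ∀ x y : V₁, H.Reachable (inl x) (inl y) := fun x y =>
    Reachable.map ⟨Sum.inl, fun h => hfL _ _ h⟩ (hG₁.preconnected x y)
  have rR : ∀ x y : V₂, H.Reachable (inr x) (inr y) := fun x y =>
    Reachable.map ⟨Sum.inr, fun h => hfR _ _ h⟩ (hG₂.preconnected x y)
  have key : ∃ u : V₁, ∃ v : V₂, H.Adj (inl u) (inr v) := by
    rcases hs with hs | hs
    · exact ⟨a, c, by rw [deleteEdges_adj]; exact ⟨breed2_adj_lr.mpr (Or.inl ⟨rfl, rfl⟩), hs⟩⟩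
    · exact ⟨b, d, by rw [deleteEdges_adj]; exact ⟨breed2_adj_lr.mpr (Or.inr ⟨rfl, rfl⟩), hs⟩⟩
  obtain ⟨u, v, huv⟩ := key
  have hcross : H.Reachable (inl u) (inr v) := huv.reachable
  rw [connected_iff]
  refine ⟨fun p q => ?_, ⟨inl h₁.nonempty.some⟩⟩
  cases p with
  | inl x =>
    cases q with
    | inl y => exact rL x y
    | inr y => exact ((rL x u).trans hcross).trans (rR v y)
  | inr x =>
    cases q with
    | inl y => exact ((rR x v).trans hcross.symm).trans (rL u y)
    | inr y => exact rR x y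

lemma breed2_walk_side {C : Set (Sym2 (V₁ ⊕ V₂))}
    (hC : C = {s(Sum.inl a, Sum.inr c), s(Sum.inl b, Sum.inr d)}) :
    ∀ {p q : V₁ ⊕ V₂}, ((breed2 G₁ G₂ a b c d).deleteEdges C).Walk p q →
      p.isLeft = q.isLeft := by
  intro p q w
  induction w with
  | nil => rfl
  | @cons u v w h _ ih =>
    refine Eq.trans ?_ ih
    rw [deleteEdges_adj] at h
    cases u with
    | inl x => cases v with
      | inl y => rfl
      | inr y =>
        exfalso
        rcases breed2_adj_lr.mp h.1 with ⟨rfl, rfl⟩ | ⟨rfl, rfl⟩ <;>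
          simp [hC] at h
    | inr x => cases v with
      | inl y =>
        exfalso
        rcases breed2_adj_rl.mp h.1 with ⟨rfl, rfl⟩ | ⟨rfl, rfl⟩ <;>
          simp [hC, Sym2.eq_swap] at h
      | inr y => rfl

lemma card_insert_image_left {G : SimpleGraph V₁} {u w : V₁} {z : V₁ ⊕ V₂}
    {T : Set (V₁ ⊕ V₂)}
    (hG : ∀ v : V₁, (G.neighborSet v).ncard = 3) (huw : G.Adj u w)
    (hz : ∀ y : V₁, z ≠ inl y)
    (hset : T = insert z (inl '' (G.neighborSet u \ {w}))) : T.ncard = 3 := by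
  have hfin : (G.neighborSet u).Finite := Set.finite_of_ncard_ne_zero (by rw [hG]; omega)
  have h2 : ((inl '' (G.neighborSet u \ {w})) : Set (V₁ ⊕ V₂)).Finite := (hfin.diff).image _
  have hnm : z ∉ ((inl '' (G.neighborSet u \ {w})) : Set (V₁ ⊕ V₂)) := by
    rintro ⟨y, -, rfl⟩
    exact hz y rfl
  have hmem : w ∈ G.neighborSet u := huw
  rw [hset, Set.ncard_insert_of_notMem hnm h2, Set.ncard_image_of_injective _ inl_injective,
    Set.ncard_diff_singleton_of_mem hmem, hG]

lemma card_insert_image_right {G : SimpleGraph V₂} {u w : V₂} {z : V₁ ⊕ V₂}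
    {T : Set (V₁ ⊕ V₂)}
    (hG : ∀ v : V₂, (G.neighborSet v).ncard = 3) (huw : G.Adj u w)
    (hz : ∀ y : V₂, z ≠ inr y)
    (hset : T = insert z (inr '' (G.neighborSet u \ {w}))) : T.ncard = 3 := by
  have hfin : (G.neighborSet u).Finite := Set.finite_of_ncard_ne_zero (by rw [hG]; omega)
  have h2 : ((inr '' (G.neighborSet u \ {w})) : Set (V₁ ⊕ V₂)).Finite := (hfin.diff).image _
  have hnm : z ∉ ((inr '' (G.neighborSet u \ {w})) : Set (V₁ ⊕ V₂)) := by
    rintro ⟨y, -, rfl⟩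
    exact hz y rfl
  have hmem : w ∈ G.neighborSet u := huw
  rw [hset, Set.ncard_insert_of_notMem hnm h2, Set.ncard_image_of_injective _ inr_injective,
    Set.ncard_diff_singleton_of_mem hmem, hG]

lemma breed2_cubic (hab : G₁.Adj a b) (hcd : G₂.Adj c d)
    (hc₁ : IsCubic G₁) (hc₂ : IsCubic G₂) : IsCubic (breed2 G₁ G₂ a b c d) := by
  intro v
  cases v with
  | inl x =>
    by_cases hxa : x = a
    · subst hxa
      refine card_insert_image_left (z := Sum.inr c) hc₁ hab (fun y => by simp) ?_
      ext p
      cases p <;>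
        simp [mem_neighborSet, breed2_adj_ll, breed2_adj_lr, Sym2.eq_iff, hab.ne]
    · by_cases hxb : x = b
      · subst hxb
        refine card_insert_image_left (z := Sum.inr d) hc₁ hab.symm (fun y => by simp) ?_
        ext p
        cases p <;>
          simp [mem_neighborSet, breed2_adj_ll, breed2_adj_lr, Sym2.eq_iff, hab.ne']
      · have hset : (breed2 G₁ G₂ a b c d).neighborSet (inl x) = inl '' (G₁.neighborSet x) := by
          ext p
          cases p <;>
            simp [mem_neighborSet, breed2_adj_ll, breed2_adj_lr, Sym2.eq_iff, hxa, hxb]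
        rw [hset, Set.ncard_image_of_injective _ inl_injective, hc₁]
  | inr x =>
    by_cases hxc : x = c
    · subst hxc
      refine card_insert_image_right (z := Sum.inl a) hc₂ hcd (fun y => by simp) ?_
      ext p
      cases p <;>
        simp [mem_neighborSet, breed2_adj_rr, breed2_adj_rl, Sym2.eq_iff, hcd.ne]
    · by_cases hxd : x = d
      · subst hxd
        refine card_insert_image_right (z := Sum.inl b) hc₂ hcd.symm (fun y => by simp) ?_
        ext p
        cases p <;>
          simp [mem_neighborSet, breed2_adj_rr, breed2_adj_rl, Sym2.eq_iff, hcd.ne']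
      · have hset : (breed2 G₁ G₂ a b c d).neighborSet (inr x) = inr '' (G₂.neighborSet x) := by
          ext p
          cases p <;>
            simp [mem_neighborSet, breed2_adj_rr, breed2_adj_rl, Sym2.eq_iff, hxc, hxd]
        rw [hset, Set.ncard_image_of_injective _ inr_injective, hc₂]

end Aux

/-- the result of a type 2 breeding operation on connected cubic graphs
along non-bridge edges is a connected cubic graph in which the two new edges form a
2-cracker. -/
theorem breed2_spec {V₁ V₂ : Type*} (G₁ : SimpleGraph V₁) (G₂ : SimpleGraph V₂)
    (h₁ : G₁.Connected) (h₂ : G₂.Connected) (hc₁ : IsCubic G₁) (hc₂ : IsCubic G₂)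
    (a b : V₁) (hab : G₁.Adj a b) (hnb₁ : ¬ G₁.IsBridge s(a, b))
    (c d : V₂) (hcd : G₂.Adj c d) (hnb₂ : ¬ G₂.IsBridge s(c, d)) :
    (breed2 G₁ G₂ a b c d).Connected ∧ IsCubic (breed2 G₁ G₂ a b c d) ∧
      IsKCracker (breed2 G₁ G₂ a b c d)
        {s(Sum.inl a, Sum.inr c), s(Sum.inl b, Sum.inr d)} 2 := by
  set e₁ : Sym2 (V₁ ⊕ V₂) := s(Sum.inl a, Sum.inr c) with he₁
  set e₂ : Sym2 (V₁ ⊕ V₂) := s(Sum.inl b, Sum.inr d) with he₂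
  have hne : e₁ ≠ e₂ := by
    simp [he₁, he₂, Sym2.eq_iff, hab.ne]
  have hconn : (breed2 G₁ G₂ a b c d).Connected := by
    have := breed2_del_connected (S := ∅) h₁ h₂ hab hnb₁ hcd hnb₂ (Set.empty_subset _)
      (Or.inl (Set.notMem_empty _))
    rwa [deleteEdges_empty] at this
  refine ⟨hconn, breed2_cubic hab hcd hc₁ hc₂, ⟨⟨⟨e₁, by simp⟩, ?_, ?_, ?_, ?_⟩,
    Set.ncard_pair hne⟩⟩
  · -- subset of edge set
    rintro e he
    rcases he with rfl | rfl
    · exact breed2_adj_lr.mpr (Or.inl ⟨rfl, rfl⟩)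
    · exact breed2_adj_lr.mpr (Or.inr ⟨rfl, rfl⟩)
  · -- pairwise disjoint
    intro e he f hf hef v hv
    rcases he with rfl | rfl <;> rcases hf with rfl | rfl
    · exact hef rfl
    · rcases hv with ⟨hv1, hv2⟩
      rw [he₁, Sym2.mem_iff] at hv1
      rw [he₂, Sym2.mem_iff] at hv2
      rcases hv1 with rfl | rfl <;> rcases hv2 with h | h <;> simp_all [hab.ne, hcd.ne]
    · rcases hv with ⟨hv1, hv2⟩
      rw [he₂, Sym2.mem_iff] at hv1
      rw [he₁, Sym2.mem_iff] at hv2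
      rcases hv1 with rfl | rfl <;> rcases hv2 with h | h <;> simp_all [hab.ne, hcd.ne]
    · exact hef rfl
  · -- deleting both edges disconnects
    intro hcon
    obtain ⟨w⟩ := hcon.preconnected (Sum.inl a) (Sum.inr c)
    simpa using breed2_walk_side rfl w
  · -- proper subsets do not disconnect
    intro C' hC'
    have hsub : C' ⊆ {e₁, e₂} := hC'.subset
    have hmiss : e₁ ∉ C' ∨ e₂ ∉ C' := by
      by_contra hcontra
      push_neg at hcontra
      exact hC'.ne (Set.Subset.antisymm hsub (by
        rintro e (rfl | rfl)
        · exact hcontra.1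
        · exact hcontra.2))
    exact breed2_del_connected h₁ h₂ hab hnb₁ hcd hnb₂ hsub hmiss
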